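/- In any double algebra, for all $a \in A$ and $t \in T$, $\Phi_B(a\star t) = \Phi_B(\nu_B(t)\star a)$, where $\nu_B(t) := \Phi_T\Phi_L\Phi_B\Phi_R(t)$ (a Nakayama-type automorphism of $T$ relative to $\Phi_B$). -/
import Mathlib


/-- A double algebra over a commutative ring `k`: a `k`-module `A` with two
associative unital bilinear multiplications, the vertical `vmul` (written `∘` in the
paper, unit `e`) and the horizontal `hmul` (written `⋆`, unit `i`), satisfying
axioms A1–A8 of Szlachányi's Definition 1.1. -/
structure DoubleAlgebra (k : Type*) (A : Type*) [CommRing k] [AddCommGroup A]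
    [Module k A] where
  vmul : A →ₗ[k] A →ₗ[k] A
  hmul : A →ₗ[k] A →ₗ[k] A
  e : A
  i : A
  vmul_assoc : ∀ a b c, vmul (vmul a b) c = vmul a (vmul b c)
  hmul_assoc : ∀ a b c, hmul (hmul a b) c = hmul a (hmul b c)
  vmul_e : ∀ a, vmul a e = a
  e_vmul : ∀ a, vmul e a = a
  hmul_i : ∀ a, hmul a i = a
  i_hmul : ∀ a, hmul i a = a
  A1 : ∀ a b, vmul (hmul a e) b = hmul (vmul (hmul a e) i) b
  A2 : ∀ a b, vmul a (hmul b e) = hmul (vmul i (hmul b e)) a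
  A3 : ∀ a b, hmul (vmul a i) b = vmul (hmul (vmul a i) e) b
  A4 : ∀ a b, hmul a (vmul b i) = vmul (hmul e (vmul b i)) a
  A5 : ∀ a b, vmul a (hmul e b) = hmul a (vmul i (hmul e b))
  A6 : ∀ a b, vmul (hmul e a) b = hmul b (vmul (hmul e a) i)
  A7 : ∀ a b, hmul a (vmul i b) = vmul a (hmul e (vmul i b))
  A8 : ∀ a b, hmul (vmul i a) b = vmul b (hmul (vmul i a) e)

variable {k A : Type*} [CommRing k] [AddCommGroup A] [Module k A]

/-- `Φ_L(a) = a ⋆ e`. -/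
def DoubleAlgebra.PhiL (D : DoubleAlgebra k A) (a : A) : A := D.hmul a D.e
/-- `Φ_R(a) = e ⋆ a`. -/
def DoubleAlgebra.PhiR (D : DoubleAlgebra k A) (a : A) : A := D.hmul D.e a
/-- `Φ_B(a) = a ∘ i`. -/
def DoubleAlgebra.PhiB (D : DoubleAlgebra k A) (a : A) : A := D.vmul a D.i
/-- `Φ_T(a) = i ∘ a`. -/
def DoubleAlgebra.PhiT (D : DoubleAlgebra k A) (a : A) : A := D.vmul D.i a

/-- for `t ∈ T`, `Φ_B(a ⋆ t) = Φ_B(ν_B(t) ⋆ a)` where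
`ν_B = Φ_T Φ_L Φ_B Φ_R`. -/
theorem stmt9 (D : DoubleAlgebra k A) (a t : A) (ht : t ∈ Set.range D.PhiT) :
    D.PhiB (D.hmul a t) =
      D.PhiB (D.hmul (D.PhiT (D.PhiL (D.PhiB (D.PhiR t)))) a) := by
  obtain ⟨s, rfl⟩ := ht
  simp only [DoubleAlgebra.PhiB, DoubleAlgebra.PhiT, DoubleAlgebra.PhiL,
    DoubleAlgebra.PhiR]
  -- LHS
  rw [D.A7 a s, D.vmul_assoc]
  -- RHS: ν = i∘(u⋆e) with u = (e⋆(i∘s))∘i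
  rw [D.A8, D.vmul_assoc]
  congr 1
  -- goal: (e⋆(i∘s))∘i = ((i∘((((e⋆(i∘s))∘i)⋆e))⋆e)∘i
  have h2 : D.hmul (D.vmul D.i (D.hmul (D.vmul (D.hmul D.e (D.vmul D.i s)) D.i) D.e)) D.e
      = D.hmul (D.vmul (D.hmul D.e (D.vmul D.i s)) D.i) D.e := by
    rw [← D.A2, D.e_vmul]
  rw [h2, ← D.A3, D.hmul_i]
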